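/- In the linear factor model with λ^P the T₀×F matrix of pre-treatment factors (assumed full column rank), the post-treatment gap satisfies the identity: θ_t(Z₁ − Z₀w) + λ_t(μ₁ − μ₀w) = λ_t(λ^{P'}λ^P)^{-1}λ^{P'}(Y₁^P − Y₀^P w) + (θ_t − λ_t(λ^{P'}λ^P)^{-1}λ^{P'}θ^P)(Z₁ − Z₀w) − λ_t(λ^{P'}λ^P)^{-1}λ^{P'}(ε₁^P − ε₀^P w), where Y_i^P = δ^P + θ^P Z_i + λ^P μ_i + ε_i^P. -/
import Mathlib


open Finset Matrix

/-- The Abadie–Diamond–Hainmueller regression decomposition of the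
post-treatment gap in the linear factor model. -/
theorem ADH_regression_decomposition
    (T₀ F k J : ℕ)
    (lamP : Matrix (Fin T₀) (Fin F) ℝ) (hrank : IsUnit (lamP.transpose * lamP).det)
    (θP : Matrix (Fin T₀) (Fin k) ℝ) (δP : Fin T₀ → ℝ)
    (Z₁ : Fin k → ℝ) (Z₀ : Matrix (Fin k) (Fin J) ℝ)
    (μ₁ : Fin F → ℝ) (μ₀ : Matrix (Fin F) (Fin J) ℝ)
    (ε₁ : Fin T₀ → ℝ) (ε₀ : Matrix (Fin T₀) (Fin J) ℝ)
    (Y₁P : Fin T₀ → ℝ) (Y₀P : Matrix (Fin T₀) (Fin J) ℝ)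
    (hY₁ : Y₁P = δP + θP *ᵥ Z₁ + lamP *ᵥ μ₁ + ε₁)
    (hY₀ : ∀ j, (fun s => Y₀P s j)
      = δP + θP *ᵥ (fun i => Z₀ i j) + lamP *ᵥ (fun f => μ₀ f j) + (fun s => ε₀ s j))
    (θt : Fin k → ℝ) (lamt : Fin F → ℝ)
    (w : Fin J → ℝ) (hw : w ∈ stdSimplex ℝ (Fin J))
    (P : (Fin T₀ → ℝ) → ℝ)
    (hP : ∀ u, P u = lamt ⬝ᵥ ((lamP.transpose * lamP)⁻¹ *ᵥ (lamP.transpose *ᵥ u))) :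
    θt ⬝ᵥ (Z₁ - Z₀ *ᵥ w) + lamt ⬝ᵥ (μ₁ - μ₀ *ᵥ w)
      = P (Y₁P - Y₀P *ᵥ w)
        + (fun i => θt i - P (fun s => θP s i)) ⬝ᵥ (Z₁ - Z₀ *ᵥ w)
        - P (ε₁ - ε₀ *ᵥ w) := by
  set M : Matrix (Fin F) (Fin T₀) ℝ := (lamP.transpose * lamP)⁻¹ * lamP.transpose with hM
  have hP' : ∀ u, P u = lamt ⬝ᵥ (M *ᵥ u) := by
    intro u; rw [hP u, hM, ← Matrix.mulVec_mulVec]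
  have hMl : M * lamP = 1 := by
    rw [hM, Matrix.mul_assoc, Matrix.nonsing_inv_mul _ hrank]
  have hsum : ∑ j, w j = 1 := hw.2
  set x : Fin k → ℝ := Z₁ - Z₀ *ᵥ w with hx
  set m : Fin F → ℝ := μ₁ - μ₀ *ᵥ w with hm
  set e : Fin T₀ → ℝ := ε₁ - ε₀ *ᵥ w with he
  have hE : Y₁P - Y₀P *ᵥ w = θP *ᵥ x + lamP *ᵥ m + e := by
    funext s
    have hcol : ∀ j : Fin J, Y₀P s j
        = δP s + (θP *ᵥ fun i => Z₀ i j) s + (lamP *ᵥ fun f => μ₀ f j) s + ε₀ s j := by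
      intro j
      simpa using congrFun (hY₀ j) s
    have hδ : ∑ j : Fin J, δP s * w j = δP s := by
      rw [← Finset.mul_sum, hsum, mul_one]
    have hθ : ∑ j : Fin J, (∑ i : Fin k, θP s i * Z₀ i j) * w j
        = ∑ i : Fin k, θP s i * (∑ j : Fin J, Z₀ i j * w j) := by
      simp only [Finset.sum_mul, Finset.mul_sum, mul_assoc]
      rw [Finset.sum_comm]
    have hlam : ∑ j : Fin J, (∑ f : Fin F, lamP s f * μ₀ f j) * w j
        = ∑ f : Fin F, lamP s f * (∑ j : Fin J, μ₀ f j * w j) := by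
      simp only [Finset.sum_mul, Finset.mul_sum, mul_assoc]
      rw [Finset.sum_comm]
    simp only [Pi.sub_apply, Pi.add_apply, hY₁, hx, hm, he, Matrix.mulVec, dotProduct]
    simp only [hcol, Matrix.mulVec, dotProduct, add_mul, Finset.sum_add_distrib,
      hδ, hθ, hlam, mul_sub, Finset.sum_sub_distrib]
    ring
  have hθcol : (fun i => P (fun s => θP s i)) = lamt ᵥ* (M * θP) := by
    funext i
    rw [hP']
    simp only [Matrix.vecMul, Matrix.mulVec, dotProduct, Matrix.mul_apply, Finset.mul_sum]
  have hPy : P (Y₁P - Y₀P *ᵥ w)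
      = (lamt ᵥ* (M * θP)) ⬝ᵥ x + lamt ⬝ᵥ m + P e := by
    rw [hP', hP', hE]
    simp only [Matrix.mulVec_add, dotProduct_add]
    rw [Matrix.mulVec_mulVec, Matrix.mulVec_mulVec, hMl, Matrix.one_mulVec,
      Matrix.dotProduct_mulVec]
  have hsub : (fun i => θt i - P (fun s => θP s i)) ⬝ᵥ x
      = θt ⬝ᵥ x - (lamt ᵥ* (M * θP)) ⬝ᵥ x := by
    rw [← sub_dotProduct]
    congr 1
    funext i
    simp [congrFun hθcol i]
  rw [hPy, hsub]
  ring
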